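/- Let μ be a Borel probability measure on ℝ with μ([0,∞)) = 1, with cumulative distribution function F(x) = μ((−∞, x]), and let H(x) = (μ ∗ μ)((−∞, x]) be the cumulative distribution function of the convolution μ ∗ μ. Then for every a ≥ 0, ∫₀^a H(y) dy = ∫₀^a F(y)·F(a − y) dy. -/

import Mathlib

open MeasureTheory
open scoped ENNReal

/-- If `μ` is a Borel probability measure on `ℝ` carried by `[0,∞)`, `F` its CDF and `H` the
CDF of `μ ∗ μ`, then for every `a ≥ 0`, `∫₀^a H(y) dy = ∫₀^a F(y)·F(a − y) dy`. -/
theorem integral_conv_cdf_eq (μ : Measure ℝ) [IsProbabilityMeasure μ]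
    (hμ : μ (Set.Ici (0:ℝ)) = 1)
    (F H : ℝ → ℝ) (hF : ∀ x, F x = (μ (Set.Iic x)).toReal)
    (hH : ∀ x, H x = ((Measure.conv μ μ) (Set.Iic x)).toReal)
    (a : ℝ) (ha : 0 ≤ a) :
    ∫ y in (0:ℝ)..a, H y = ∫ y in (0:ℝ)..a, F y * F (a - y) := by
  classical
  -- basic properties of F
  have hFmono : Monotone F := by
    intro s t hst
    rw [hF s, hF t]
    exact ENNReal.toReal_mono (measure_ne_top μ _) (measure_mono (Set.Iic_subset_Iic.2 hst))
  have hFmeas : Measurable F := hFmono.measurable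
  have hFnonneg : ∀ t, 0 ≤ F t := fun t => by rw [hF t]; exact ENNReal.toReal_nonneg
  have hFle1 : ∀ t, F t ≤ 1 := by
    intro t
    rw [hF t]
    have h1 : μ (Set.Iic t) ≤ 1 := prob_le_one
    calc (μ (Set.Iic t)).toReal ≤ (1 : ℝ≥0∞).toReal :=
          ENNReal.toReal_mono (by simp) h1
      _ = 1 := by simp
  have hFnorm : ∀ t, ‖F t‖ ≤ 1 := fun t => by
    rw [Real.norm_eq_abs, abs_of_nonneg (hFnonneg t)]; exact hFle1 t
  -- F vanishes on negatives
  have hμneg : μ (Set.Iio (0:ℝ)) = 0 := by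
    have h := measure_compl (s := Set.Ici (0:ℝ)) measurableSet_Ici (measure_ne_top μ _)
    rw [hμ] at h
    simpa [Set.compl_Ici, measure_univ] using h
  have hFneg : ∀ t < (0:ℝ), F t = 0 := by
    intro t ht
    rw [hF t]
    have h0 : μ (Set.Iic t) = 0 :=
      measure_mono_null (fun y hy => lt_of_le_of_lt hy ht) hμneg
    simp [h0]
  -- F is interval integrable everywhere
  have hFint : ∀ c d : ℝ, IntervalIntegrable F MeasureTheory.volume c d := fun c d =>
    hFmono.intervalIntegrable
  -- H as an integral
  have hH' : ∀ y, H y = ∫ x, F (y - x) ∂μ := by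
    intro y
    rw [hH y]
    have hadd : Measurable fun p : ℝ × ℝ => p.1 + p.2 := measurable_add
    have h1 : Measure.conv μ μ (Set.Iic y)
        = (μ.prod μ) ((fun p : ℝ × ℝ => p.1 + p.2) ⁻¹' Set.Iic y) := by
      rw [Measure.conv, Measure.map_apply hadd measurableSet_Iic]
    have h2 : (μ.prod μ) ((fun p : ℝ × ℝ => p.1 + p.2) ⁻¹' Set.Iic y)
        = ∫⁻ x, μ (Set.Iic (y - x)) ∂μ := by
      rw [Measure.prod_apply (hadd measurableSet_Iic)]
      congr 1
      ext x
      congr 1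
      ext z
      simp [Set.mem_preimage, add_comm]
      constructor
      · intro h; linarith
      · intro h; linarith
    rw [h1, h2]
    have hmeasIic : Measurable fun t : ℝ => μ (Set.Iic t) := by
      have : Monotone fun t : ℝ => μ (Set.Iic t) := fun s t hst =>
        measure_mono (Set.Iic_subset_Iic.2 hst)
      exact this.measurable
    have hmeas : Measurable fun x : ℝ => μ (Set.Iic (y - x)) :=
      hmeasIic.comp (measurable_const.sub measurable_id)
    rw [← MeasureTheory.integral_toReal hmeas.aemeasurable
        (Filter.Eventually.of_forall fun x => lt_of_le_of_lt prob_le_one (by simp))]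
    congr 1
    ext x
    rw [hF]
  -- a.e. statements
  have hae0 : ∀ᵐ y : ℝ, y ≠ (0:ℝ) := by
    rw [MeasureTheory.ae_iff]
    simp
  have haex : ∀ᵐ x ∂μ, (0:ℝ) ≤ x := by
    rw [MeasureTheory.ae_iff]
    simp only [not_le]
    exact hμneg
  have hzero : ∀ c : ℝ, c ≤ 0 → ∫ y in c..(0:ℝ), F y = 0 := by
    intro c hc
    have : ∫ y in c..(0:ℝ), F y = ∫ y in c..(0:ℝ), (0:ℝ) := by
      apply intervalIntegral.integral_congr_ae
      filter_upwards [hae0] with y hy hmem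
      rcases Set.mem_uIoc.1 hmem with h | h
      · exact hFneg y (lt_of_le_of_ne h.2 hy)
      · exact absurd (h.1.trans_le (h.2.trans hc)) (lt_irrefl 0)
    simp only [this, intervalIntegral.integral_zero]
  haveI : IsFiniteMeasure (MeasureTheory.volume.restrict (Set.Ioc (0:ℝ) a)) :=
    ⟨by rw [Measure.restrict_apply_univ]; exact measure_Ioc_lt_top⟩
  -- LHS: Fubini
  have hLmeas : Measurable fun p : ℝ × ℝ => F (p.1 - p.2) :=
    hFmeas.comp (measurable_fst.sub measurable_snd)
  have hLint : Integrable (Function.uncurry fun y x => F (y - x))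
      ((MeasureTheory.volume.restrict (Set.Ioc (0:ℝ) a)).prod μ) := by
    refine (integrable_const (1:ℝ)).mono' ?_ ?_
    · exact hLmeas.aestronglyMeasurable
    · exact Filter.Eventually.of_forall fun p => hFnorm _
  have hL : ∫ y in (0:ℝ)..a, H y
      = ∫ x, (∫ y in Set.Ioc (0:ℝ) a, F (y - x)) ∂μ := by
    rw [intervalIntegral.integral_of_le ha]
    simp only [hH']
    exact MeasureTheory.integral_integral_swap hLint
  -- RHS: Fubini
  have hRmeas : Measurable (Function.uncurry fun y x : ℝ =>
      (Set.Iic y).indicator (fun _ => F (a - y)) x) := by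
    have : (Function.uncurry fun y x : ℝ => (Set.Iic y).indicator (fun _ => F (a - y)) x)
        = Set.indicator {p : ℝ × ℝ | p.2 ≤ p.1} (fun p => F (a - p.1)) := by
      ext p
      simp [Function.uncurry, Set.indicator_apply, Set.mem_Iic]
    rw [this]
    exact (hFmeas.comp (measurable_const.sub measurable_fst)).indicator
      (measurableSet_le measurable_snd measurable_fst)
  have hRint : Integrable (Function.uncurry fun y x : ℝ =>
      (Set.Iic y).indicator (fun _ => F (a - y)) x)
      ((MeasureTheory.volume.restrict (Set.Ioc (0:ℝ) a)).prod μ) := by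
    refine (integrable_const (1:ℝ)).mono' hRmeas.aestronglyMeasurable ?_
    refine Filter.Eventually.of_forall fun p => ?_
    simp only [Function.uncurry, Set.indicator_apply]
    split
    · exact hFnorm _
    · simp
  have hR : ∫ y in (0:ℝ)..a, F y * F (a - y)
      = ∫ x, (∫ y in Set.Ioc (0:ℝ) a, (Set.Iic y).indicator (fun _ => F (a - y)) x) ∂μ := by
    rw [intervalIntegral.integral_of_le ha]
    have hpt : ∀ y : ℝ, F y * F (a - y)
        = ∫ x, (Set.Iic y).indicator (fun _ => F (a - y)) x ∂μ := by
      intro y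
      rw [MeasureTheory.integral_indicator_const (F (a - y)) measurableSet_Iic, hF y,
        smul_eq_mul]
      rfl
    simp only [hpt]
    exact MeasureTheory.integral_integral_swap hRint
  rw [hL, hR]
  -- pointwise (a.e. in x) equality of the inner integrals
  apply MeasureTheory.integral_congr_ae
  filter_upwards [haex] with x hx
  -- left inner integral
  have hLinner : (∫ y in Set.Ioc (0:ℝ) a, F (y - x))
      = ∫ u in (0:ℝ)..(a - x), F u := by
    rw [← intervalIntegral.integral_of_le ha, intervalIntegral.integral_comp_sub_right F x,
      zero_sub,
      ← intervalIntegral.integral_add_adjacent_intervals (hFint (-x) 0) (hFint 0 (a - x)),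
      hzero (-x) (by linarith), zero_add]
  -- right inner integral
  have hRinner : (∫ y in Set.Ioc (0:ℝ) a, (Set.Iic y).indicator (fun _ => F (a - y)) x)
      = ∫ y in Set.Ioc x a, F (a - y) := by
    have h1 : (fun y : ℝ => (Set.Iic y).indicator (fun _ => F (a - y)) x)
        = fun y => (Set.Ici x).indicator (fun y => F (a - y)) y := by
      ext y
      simp [Set.indicator_apply, Set.mem_Iic, Set.mem_Ici]
    rw [h1, MeasureTheory.setIntegral_indicator measurableSet_Ici]
    apply MeasureTheory.setIntegral_congr_set
    refine Filter.eventuallyEq_iff_exists_mem.2 ?_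
    refine ⟨{y | y ≠ x}, ?_, ?_⟩
    · rw [MeasureTheory.mem_ae_iff]
      have : {y : ℝ | y ≠ x}ᶜ = {x} := by ext y; simp
      rw [this]
      exact Real.volume_singleton
    · intro y hy
      simp only [Set.mem_Ioc, Set.mem_inter_iff, Set.mem_Ici, eq_iff_iff]
      constructor
      · rintro ⟨⟨_, hy2⟩, hy3⟩
        exact ⟨lt_of_le_of_ne hy3 (Ne.symm hy), hy2⟩
      · rintro ⟨hy1, hy2⟩
        exact ⟨⟨lt_of_le_of_lt hx hy1, hy2⟩, hy1.le⟩
  rw [hLinner, hRinner]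
  rcases le_or_gt x a with hxa | hxa
  · rw [← intervalIntegral.integral_of_le hxa, intervalIntegral.integral_comp_sub_left F a]
    simp
  · have h1 : Set.Ioc x a = (∅ : Set ℝ) := Set.Ioc_eq_empty (not_lt.2 hxa.le)
    rw [h1]
    have h2 : ∫ u in (0:ℝ)..(a - x), F u = 0 := by
      rw [← neg_neg (a - x), show -(a-x) = x - a by ring, intervalIntegral.integral_symm,
        hzero]
      · ring
      · linarith
    simp [h2]
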